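/- Suppose t₀ ∈ ℝ satisfies F(t₀) > 0 and let λ ≥ 0. Then (M_λ(t))_{t ≥ t₀} is a reverse martingale with respect to the reverse filtration (G_t)_{t ≥ t₀}: for all t₀ ≤ s₀ < s₁, E[ M_λ(s₀) | G_{s₁} ] = M_λ(s₁) almost surely. Moreover E[ M_λ(t) ] = 1 for all t ≥ t₀. -/

import Mathlib

open MeasureTheory ProbabilityTheory Real

lemma integral_prod_of_iIndepFun' {Ω : Type*} [MeasureSpace Ω]
    [IsProbabilityMeasure (ℙ : Measure Ω)] {n : ℕ} (f : Fin n → Ω → ℝ)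
    (hindep : iIndepFun f ℙ)
    (hmeas : ∀ i, Measurable (f i))
    (s : Finset (Fin n)) :
    ∫ ω, ∏ i ∈ s, f i ω ∂ℙ = ∏ i ∈ s, ∫ ω, f i ω ∂ℙ := by
  classical
  induction s using Finset.induction_on with
  | empty => simp
  | @insert i s hi ih =>
    have hIndep : IndepFun (∏ j ∈ s, f j) (f i) ℙ :=
      hindep.indepFun_finset_prod_of_notMem hmeas hi
    have h1 : ∫ ω, ∏ j ∈ insert i s, f j ω ∂ℙ
        = ∫ ω, ((∏ j ∈ s, f j) * f i) ω ∂ℙ := by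
      congr 1
      funext ω
      simp [Finset.prod_insert hi, mul_comm]
    have hpm : AEStronglyMeasurable (∏ j ∈ s, f j) ℙ := by
      have : (∏ j ∈ s, f j) = fun ω => ∏ j ∈ s, f j ω := by
        funext ω; simp
      rw [this]
      exact (Finset.measurable_prod s (fun j _ => hmeas j)).aestronglyMeasurable
    rw [h1, hIndep.integral_mul_eq_mul_integral hpm (hmeas i).aestronglyMeasurable]
    have h2 : ∫ ω, (∏ j ∈ s, f j) ω ∂ℙ = ∏ j ∈ s, ∫ ω, f j ω ∂ℙ := by
      rw [← ih]; congr 1; funext ω; simp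
    rw [h2, Finset.prod_insert hi, mul_comm]

theorem reverse_martingale_M
    {Ω : Type*} [MeasureSpace Ω] [IsProbabilityMeasure (ℙ : Measure Ω)]
    (n : ℕ) (hn : 0 < n) (X : Fin n → Ω → ℝ)
    (hmeas : ∀ i, Measurable (X i))
    (hindep : iIndepFun X ℙ)
    (hident : ∀ i j, IdentDistrib (X i) (X j) ℙ ℙ)
    (F : ℝ → ℝ) (hF : ∀ i t, F t = (ℙ {ω | X i ω ≤ t}).toReal)
    (t₀ : ℝ) (hFt₀ : 0 < F t₀) (lam : ℝ) (hlam : 0 ≤ lam)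
    (G : ℝ → MeasurableSpace Ω)
    (hG : ∀ t, G t = MeasurableSpace.generateFrom
        {A : Set Ω | ∃ (i : Fin n) (s : ℝ), t ≤ s ∧ A = {ω | X i ω ≤ s}})
    (M : ℝ → Ω → ℝ)
    (hM : ∀ t ω, M t ω = ((1 + lam) ^ n)⁻¹ *
        (1 + lam / F t) ^ (∑ i, if X i ω ≤ t then 1 else 0 : ℕ)) :
    (∀ s₀ s₁ : ℝ, t₀ ≤ s₀ → s₀ < s₁ →
        (ℙ[M s₀ | G s₁]) =ᵐ[ℙ] M s₁)
    ∧ (∀ t : ℝ, t₀ ≤ t → ∫ ω, M t ω ∂ℙ = 1) := by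
  classical
  have i₀ : Fin n := ⟨0, hn⟩
  have hFmono : ∀ s t : ℝ, s ≤ t → F s ≤ F t := by
    intro s t hst
    rw [hF i₀ s, hF i₀ t]
    exact ENNReal.toReal_mono (measure_ne_top _ _)
      (measure_mono (fun ω h => le_trans h hst))
  have hFpos : ∀ t, t₀ ≤ t → 0 < F t := fun t ht => lt_of_lt_of_le hFt₀ (hFmono _ _ ht)
  have h1lam : (0:ℝ) < 1 + lam := by linarith
  have hEvt : ∀ (i : Fin n) (s : ℝ), MeasurableSet {ω | X i ω ≤ s} :=
    fun i s => measurableSet_le (hmeas i) measurable_const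
  have hMnn : ∀ t, t₀ ≤ t → ∀ ω, 0 ≤ M t ω := by
    intro t ht ω
    rw [hM]
    have h1 : (0:ℝ) ≤ lam / F t := div_nonneg hlam (hFpos t ht).le
    have h2 : (0:ℝ) ≤ 1 + lam / F t := by linarith
    have h3 : (0:ℝ) ≤ ((1 + lam) ^ n)⁻¹ := by positivity
    exact mul_nonneg h3 (pow_nonneg h2 _)
  have hMmeas : ∀ t, Measurable (M t) := by
    intro t
    have : M t = fun ω => ((1 + lam) ^ n)⁻¹ *
        (1 + lam / F t) ^ (∑ i, if X i ω ≤ t then 1 else 0 : ℕ) := funext (hM t)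
    rw [this]
    apply Measurable.const_mul
    have hN : Measurable (fun ω => (∑ i, if X i ω ≤ t then 1 else 0 : ℕ)) := by
      apply Finset.measurable_sum
      intro i _
      exact Measurable.ite (hEvt i t) measurable_const measurable_const
    exact (measurable_from_top (f := fun k : ℕ => (1 + lam / F t) ^ k)).comp hN
  have hMbd : ∀ t, t₀ ≤ t → ∀ ω, M t ω ≤ ((1 + lam) ^ n)⁻¹ * (1 + lam / F t) ^ n := by
    intro t ht ω
    rw [hM]
    have hbase : (1:ℝ) ≤ 1 + lam / F t := by
      have : 0 ≤ lam / F t := div_nonneg hlam (hFpos t ht).le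
      linarith
    have hexp : (∑ i, if X i ω ≤ t then 1 else 0 : ℕ) ≤ n := by
      calc (∑ i, if X i ω ≤ t then 1 else 0 : ℕ) ≤ ∑ _i : Fin n, 1 := by
            apply Finset.sum_le_sum
            intro i _
            split <;> simp
        _ = n := by simp
    have := pow_le_pow_right₀ hbase hexp
    have hc : (0:ℝ) ≤ ((1 + lam) ^ n)⁻¹ := by positivity
    exact mul_le_mul_of_nonneg_left this hc
  have hMint : ∀ t, t₀ ≤ t → Integrable (M t) ℙ := by
    intro t ht
    apply Integrable.mono' (integrable_const (((1 + lam) ^ n)⁻¹ * (1 + lam / F t) ^ n))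
      (hMmeas t).aestronglyMeasurable
    apply Filter.Eventually.of_forall
    intro ω
    rw [Real.norm_eq_abs, abs_of_nonneg (hMnn t ht ω)]
    exact hMbd t ht ω
  -- the key computation
  have key : ∀ t, t₀ ≤ t → ∀ (I : Finset (Fin n)) (u : Fin n → ℝ), (∀ i ∈ I, t ≤ u i) →
      ∫ ω in {ω | ∀ i ∈ I, X i ω ≤ u i}, M t ω ∂ℙ
        = ((1 + lam) ^ n)⁻¹ * ∏ i, (if i ∈ I then F (u i) + lam else 1 + lam) := by
    intro t ht I u hu
    set a := lam / F t with ha_def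
    have ha : 0 ≤ a := div_nonneg hlam (hFpos t ht).le
    set A := {ω | ∀ i ∈ I, X i ω ≤ u i} with hA_def
    have hA : MeasurableSet A := by
      have : A = ⋂ i ∈ I, {ω | X i ω ≤ u i} := by
        ext ω; simp [hA_def]
      rw [this]
      exact Finset.measurableSet_biInter I (fun i _ => hEvt i (u i))
    set g : Fin n → ℝ → ℝ := fun i x =>
      (if i ∈ I then (if x ≤ u i then (1:ℝ) else 0) else 1) *
        (if x ≤ t then 1 + a else 1) with hg_def
    have hgmeas : ∀ i, Measurable (g i) := by
      intro i
      apply Measurable.mul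
      · by_cases hi : i ∈ I
        · simp only [hg_def, if_pos hi]
          exact Measurable.ite measurableSet_Iic measurable_const measurable_const
        · simp only [hg_def, if_neg hi]
          exact measurable_const
      · exact Measurable.ite measurableSet_Iic measurable_const measurable_const
    set φ : Fin n → Ω → ℝ := fun i => g i ∘ X i with hφ_def
    -- pointwise identity
    have hpt : ∀ ω, Set.indicator A (M t) ω = ((1 + lam) ^ n)⁻¹ * ∏ i, φ i ω := by
      intro ω
      by_cases hω : ω ∈ A
      · rw [Set.indicator_of_mem hω, hM]
        congr 1
        have h1 : ∏ i, φ i ω = ∏ i, (if X i ω ≤ t then 1 + a else 1) := by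
          apply Finset.prod_congr rfl
          intro i _
          simp only [hφ_def, Function.comp_apply, hg_def]
          by_cases hi : i ∈ I
          · rw [if_pos hi, if_pos (hω i hi), one_mul]
          · rw [if_neg hi, one_mul]
        rw [h1, ← Finset.prod_pow_eq_pow_sum]
        apply Finset.prod_congr rfl
        intro i _
        by_cases h : X i ω ≤ t <;> simp [h, ha_def]
      · rw [Set.indicator_of_notMem hω]
        simp only [hA_def, Set.mem_setOf_eq, not_forall] at hω
        obtain ⟨i, hi, hXi⟩ := hω
        symm
        have : φ i ω = 0 := by
          simp only [hφ_def, Function.comp_apply, hg_def, if_pos hi, if_neg hXi, zero_mul]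
        rw [Finset.prod_eq_zero (Finset.mem_univ i) this, mul_zero]
    -- per-factor integrals
    have hind_eq : ∀ (i : Fin n) (s : ℝ),
        (fun ω => if X i ω ≤ s then (1:ℝ) else 0)
          = Set.indicator {ω | X i ω ≤ s} (fun _ => (1:ℝ)) := by
      intro i s
      funext ω
      by_cases h : X i ω ≤ s <;> simp [Set.indicator_apply, h]
    have hind_int : ∀ (i : Fin n) (s : ℝ),
        Integrable (fun ω => if X i ω ≤ s then (1:ℝ) else 0) ℙ := by
      intro i s
      rw [hind_eq i s]
      exact (integrable_const (1:ℝ)).indicator (hEvt i s)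
    have hind_val : ∀ (i : Fin n) (s : ℝ),
        ∫ ω, (if X i ω ≤ s then (1:ℝ) else 0) ∂ℙ = F s := by
      intro i s
      rw [hind_eq i s, integral_indicator_const (1:ℝ) (hEvt i s)]
      rw [hF i s]
      simp [measureReal_def]
    have hφint : ∀ i, Integrable (φ i) ℙ ∧
        ∫ ω, φ i ω ∂ℙ = (if i ∈ I then F (u i) + lam else 1 + lam) := by
      intro i
      by_cases hi : i ∈ I
      · have heq : φ i = fun ω => (if X i ω ≤ u i then (1:ℝ) else 0)
            + a * (if X i ω ≤ t then 1 else 0) := by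
          funext ω
          simp only [hφ_def, Function.comp_apply, hg_def, if_pos hi]
          by_cases h1 : X i ω ≤ t
          · have h2 : X i ω ≤ u i := le_trans h1 (hu i hi)
            simp [h1, h2]
          · simp [h1]
        constructor
        · rw [heq]
          exact (hind_int i (u i)).add ((hind_int i t).const_mul a)
        · rw [heq, integral_add (hind_int i (u i)) ((hind_int i t).const_mul a),
            integral_const_mul, hind_val, hind_val, if_pos hi]
          rw [ha_def, div_mul_cancel₀ _ (hFpos t ht).ne']
      · have heq : φ i = fun ω => 1 + a * (if X i ω ≤ t then 1 else 0) := by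
          funext ω
          simp only [hφ_def, Function.comp_apply, hg_def, if_neg hi, one_mul]
          by_cases h1 : X i ω ≤ t <;> simp [h1]
        constructor
        · rw [heq]
          exact (integrable_const 1).add ((hind_int i t).const_mul a)
        · rw [heq, integral_add (integrable_const 1) ((hind_int i t).const_mul a),
            integral_const_mul, hind_val, if_neg hi]
          simp [ha_def, div_mul_cancel₀ _ (hFpos t ht).ne']
    have hφindep : iIndepFun φ ℙ := hindep.comp g hgmeas
    have hφmeas : ∀ i, Measurable (φ i) := fun i => (hgmeas i).comp (hmeas i)
    calc ∫ ω in A, M t ω ∂ℙ = ∫ ω, Set.indicator A (M t) ω ∂ℙ := by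
          rw [integral_indicator hA]
      _ = ∫ ω, ((1 + lam) ^ n)⁻¹ * ∏ i, φ i ω ∂ℙ := by
          congr 1; funext ω; exact hpt ω
      _ = ((1 + lam) ^ n)⁻¹ * ∫ ω, ∏ i, φ i ω ∂ℙ := integral_const_mul _ _
      _ = ((1 + lam) ^ n)⁻¹ * ∏ i, ∫ ω, φ i ω ∂ℙ := by
          rw [integral_prod_of_iIndepFun' φ hφindep hφmeas]
      _ = ((1 + lam) ^ n)⁻¹ * ∏ i, (if i ∈ I then F (u i) + lam else 1 + lam) := by
          congr 1
          exact Finset.prod_congr rfl (fun i _ => (hφint i).2)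
  -- part 2
  have part2 : ∀ t : ℝ, t₀ ≤ t → ∫ ω, M t ω ∂ℙ = 1 := by
    intro t ht
    have h := key t ht ∅ (fun _ => 0) (by simp)
    have hset : {ω : Ω | ∀ i ∈ (∅ : Finset (Fin n)), X i ω ≤ 0} = Set.univ := by
      ext ω; simp
    rw [hset, setIntegral_univ] at h
    rw [h]
    simp only [Finset.notMem_empty, if_false, Finset.prod_const, Finset.card_univ,
      Fintype.card_fin]
    exact inv_mul_cancel₀ (pow_ne_zero n h1lam.ne')
  refine ⟨?_, part2⟩
  intro s₀ s₁ hs₀ hs01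
  have hs₁ : t₀ ≤ s₁ := hs₀.trans hs01.le
  set S : Set (Set Ω) := {A : Set Ω | ∃ (i : Fin n) (s : ℝ), s₁ ≤ s ∧ A = {ω | X i ω ≤ s}}
    with hS_def
  have hGs : G s₁ = MeasurableSpace.generateFrom S := hG s₁
  have hle : G s₁ ≤ (inferInstance : MeasurableSpace Ω) := by
    rw [hGs]
    apply MeasurableSpace.generateFrom_le
    rintro A ⟨i, s, _, rfl⟩
    exact hEvt i s
  -- structure of the generated pi-system
  have hstruct : ∀ A ∈ generatePiSystem S, ∃ (I : Finset (Fin n)) (u : Fin n → ℝ),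
      (∀ i ∈ I, s₁ ≤ u i) ∧ A = {ω | ∀ i ∈ I, X i ω ≤ u i} := by
    intro A hA
    induction hA with
    | base h =>
      obtain ⟨i, s, hs, rfl⟩ := h
      refine ⟨{i}, fun _ => s, by simp [hs], ?_⟩
      ext ω; simp
    | inter h1 h2 hne ih1 ih2 =>
      obtain ⟨I₁, u₁, hb₁, rfl⟩ := ih1
      obtain ⟨I₂, u₂, hb₂, rfl⟩ := ih2
      refine ⟨I₁ ∪ I₂,
        fun i => if i ∈ I₁ then (if i ∈ I₂ then min (u₁ i) (u₂ i) else u₁ i) else u₂ i,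
        ?_, ?_⟩
      · intro i hi
        dsimp only
        by_cases hi1 : i ∈ I₁
        · by_cases hi2 : i ∈ I₂
          · rw [if_pos hi1, if_pos hi2]; exact le_min (hb₁ i hi1) (hb₂ i hi2)
          · rw [if_pos hi1, if_neg hi2]; exact hb₁ i hi1
        · rw [if_neg hi1]
          rcases Finset.mem_union.mp hi with h | h
          · exact absurd h hi1
          · exact hb₂ i h
      · ext ω
        simp only [Set.mem_inter_iff, Set.mem_setOf_eq, Finset.mem_union]
        constructor
        · rintro ⟨ha1, ha2⟩ i hi
          by_cases hi1 : i ∈ I₁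
          · by_cases hi2 : i ∈ I₂
            · rw [if_pos hi1, if_pos hi2]; exact le_min (ha1 i hi1) (ha2 i hi2)
            · rw [if_pos hi1, if_neg hi2]; exact ha1 i hi1
          · rw [if_neg hi1]
            rcases hi with h | h
            · exact absurd h hi1
            · exact ha2 i h
        · intro h
          constructor
          · intro i hi1
            have := h i (Or.inl hi1)
            rw [if_pos hi1] at this
            by_cases hi2 : i ∈ I₂
            · rw [if_pos hi2] at this; exact this.trans (min_le_left _ _)
            · rw [if_neg hi2] at this; exact this
          · intro i hi2
            have := h i (Or.inr hi2)
            by_cases hi1 : i ∈ I₁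
            · rw [if_pos hi1, if_pos hi2] at this; exact this.trans (min_le_right _ _)
            · rw [if_neg hi1] at this; exact this
  -- with-density measures
  set μ₀ : Measure Ω := Measure.withDensity ℙ (fun ω => ENNReal.ofReal (M s₀ ω)) with hμ₀_def
  set μ₁ : Measure Ω := Measure.withDensity ℙ (fun ω => ENNReal.ofReal (M s₁ ω)) with hμ₁_def
  have hlint : ∀ t, t₀ ≤ t → ∫⁻ ω, ENNReal.ofReal (M t ω) ∂ℙ = 1 := by
    intro t ht
    rw [← ofReal_integral_eq_lintegral_ofReal (hMint t ht)
      (Filter.Eventually.of_forall (hMnn t ht)), part2 t ht, ENNReal.ofReal_one]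
  haveI hfin₀ : IsFiniteMeasure μ₀ := by
    apply isFiniteMeasure_withDensity
    rw [hlint s₀ hs₀]; exact ENNReal.one_ne_top
  haveI hfin₁ : IsFiniteMeasure μ₁ := by
    apply isFiniteMeasure_withDensity
    rw [hlint s₁ hs₁]; exact ENNReal.one_ne_top
  have happly : ∀ t, t₀ ≤ t → ∀ (A : Set Ω), MeasurableSet A →
      (Measure.withDensity ℙ (fun ω => ENNReal.ofReal (M t ω))) A
        = ENNReal.ofReal (∫ ω in A, M t ω ∂ℙ) := by
    intro t ht A hA
    rw [withDensity_apply _ hA,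
      ← ofReal_integral_eq_lintegral_ofReal ((hMint t ht).integrableOn)
        (Filter.Eventually.of_forall (hMnn t ht))]
  -- measure equality on the trimmed sigma-algebra
  have hmeq : μ₀.trim hle = μ₁.trim hle := by
    have hAgen : G s₁ = MeasurableSpace.generateFrom (generatePiSystem S) :=
      hGs.trans generateFrom_generatePiSystem_eq.symm
    refine ext_of_generate_finite (generatePiSystem S) hAgen
      (isPiSystem_generatePiSystem S) ?_ ?_
    · intro A hA
      have hAm : MeasurableSet[G s₁] A := by
        rw [hAgen]
        exact MeasurableSpace.measurableSet_generateFrom hA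
      obtain ⟨I, u, hb, hAeq⟩ := hstruct A hA
      rw [trim_measurableSet_eq hle hAm, trim_measurableSet_eq hle hAm,
        hμ₀_def, hμ₁_def, happly s₀ hs₀ A (hle A hAm), happly s₁ hs₁ A (hle A hAm)]
      congr 1
      rw [hAeq]
      rw [key s₀ hs₀ I u (fun i hi => hs01.le.trans (hb i hi)),
        key s₁ hs₁ I u (fun i hi => hb i hi)]
    · rw [trim_measurableSet_eq hle MeasurableSet.univ,
        trim_measurableSet_eq hle MeasurableSet.univ, hμ₀_def, hμ₁_def]
      rw [withDensity_apply _ MeasurableSet.univ, withDensity_apply _ MeasurableSet.univ]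
      rw [Measure.restrict_univ, hlint s₀ hs₀, hlint s₁ hs₁]
  -- set integrals agree
  have hsets : ∀ A : Set Ω, MeasurableSet[G s₁] A →
      ∫ ω in A, M s₀ ω ∂ℙ = ∫ ω in A, M s₁ ω ∂ℙ := by
    intro A hA
    have h0 : μ₀ A = μ₁ A := by
      rw [← trim_measurableSet_eq hle hA, ← trim_measurableSet_eq hle hA, hmeq]
    rw [hμ₀_def, hμ₁_def, happly s₀ hs₀ A (hle A hA), happly s₁ hs₁ A (hle A hA)] at h0
    have hnn0 : 0 ≤ ∫ ω in A, M s₀ ω ∂ℙ :=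
      setIntegral_nonneg (hle A hA) (fun ω _ => hMnn s₀ hs₀ ω)
    have hnn1 : 0 ≤ ∫ ω in A, M s₁ ω ∂ℙ :=
      setIntegral_nonneg (hle A hA) (fun ω _ => hMnn s₁ hs₁ ω)
    exact (ENNReal.ofReal_eq_ofReal_iff hnn0 hnn1).mp h0
  -- sigma-finiteness of trimmed measure
  haveI : SigmaFinite (Measure.trim ℙ hle) := by
    haveI : IsFiniteMeasure (Measure.trim ℙ hle) := isFiniteMeasure_trim hle
    infer_instance
  -- strong measurability of M s₁ wrt G s₁
  have hgm : AEStronglyMeasurable[G s₁] (M s₁) ℙ := by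
    have hev : ∀ i : Fin n, MeasurableSet[G s₁] {ω | X i ω ≤ s₁} := by
      intro i
      rw [hGs]
      exact MeasurableSpace.measurableSet_generateFrom ⟨i, s₁, le_refl _, rfl⟩
    have hm1 : Measurable[G s₁] (M s₁) := by
      have : M s₁ = fun ω => ((1 + lam) ^ n)⁻¹ *
          (1 + lam / F s₁) ^ (∑ i, if X i ω ≤ s₁ then 1 else 0 : ℕ) := funext (hM s₁)
      rw [this]
      apply Measurable.const_mul
      have hN : Measurable[G s₁] (fun ω => (∑ i, if X i ω ≤ s₁ then 1 else 0 : ℕ)) := by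
        apply Finset.measurable_sum
        intro i _
        exact Measurable.ite (hev i) measurable_const measurable_const
      exact (measurable_from_top (f := fun k : ℕ => (1 + lam / F s₁) ^ k)).comp hN
    exact StronglyMeasurable.aestronglyMeasurable hm1.stronglyMeasurable
  exact (ae_eq_condExp_of_forall_setIntegral_eq hle (hMint s₀ hs₀)
    (fun A hA _ => (hMint s₁ hs₁).integrableOn)
    (fun A hA _ => (hsets A hA).symm) hgm).symm
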